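/- Let $A$, $B$, $C$ be points on the unit circle and $\lambda \in (2,4)$. Then there exists a point $M$ on the unit circle such that $MA^{\lambda} + MB^{\lambda} + MC^{\lambda} \ge 2 \cdot (\sqrt{3})^{\lambda}$. -/

import Mathlib

open Real

lemma aux_far (X Y : EuclideanSpace ℝ (Fin 2)) (hX : ‖X‖ = 1) (hY : ‖Y‖ = 1)
    (ht : -(1/2) ≤ (inner ℝ X Y : ℝ)) :
    ∃ M : EuclideanSpace ℝ (Fin 2), ‖M‖ = 1 ∧ Real.sqrt 3 ≤ dist M X ∧ Real.sqrt 3 ≤ dist M Y := by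
  have hn2 : ‖X + Y‖ ^ 2 = 2 + 2 * (inner ℝ X Y : ℝ) := by
    rw [norm_add_sq_real, hX, hY]; ring
  have hn1 : (1:ℝ) ≤ ‖X + Y‖ := by
    nlinarith [norm_nonneg (X + Y)]
  have hnpos : (0:ℝ) < ‖X + Y‖ := by linarith
  have hkey : ‖X + Y‖ ≤ 2 * (1 + (inner ℝ X Y : ℝ)) := by
    nlinarith [norm_nonneg (X + Y)]
  have h2 : (1:ℝ)/2 ≤ (‖X + Y‖)⁻¹ * (1 + (inner ℝ X Y : ℝ)) := by
    have hh : ‖X + Y‖ * (1/2) ≤ 1 + (inner ℝ X Y : ℝ) := by linarith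
    calc (1:ℝ)/2 = (‖X + Y‖)⁻¹ * (‖X + Y‖ * (1/2)) := by field_simp
      _ ≤ (‖X + Y‖)⁻¹ * (1 + (inner ℝ X Y : ℝ)) := by
          apply mul_le_mul_of_nonneg_left hh (by positivity)
  have h1 : (‖X + Y‖)⁻¹ * ‖X + Y‖ = 1 := inv_mul_cancel₀ (ne_of_gt hnpos)
  refine ⟨(-(‖X + Y‖)⁻¹) • (X + Y), ?_, ?_, ?_⟩
  · rw [norm_smul]
    rw [norm_neg, norm_inv, Real.norm_eq_abs, abs_of_pos hnpos]
    field_simp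
  · have hinner : (inner ℝ ((-(‖X + Y‖)⁻¹) • (X + Y)) X : ℝ) =
        -(‖X + Y‖)⁻¹ * (1 + (inner ℝ X Y : ℝ)) := by
      rw [real_inner_smul_left, inner_add_left, real_inner_self_eq_norm_sq, hX,
        real_inner_comm Y X]
      ring
    have hd2 : 3 ≤ dist ((-(‖X + Y‖)⁻¹) • (X + Y)) X ^ 2 := by
      rw [dist_eq_norm, norm_sub_sq_real, hinner, norm_smul, norm_neg, norm_inv,
        Real.norm_eq_abs, abs_of_pos hnpos, hX]
      nlinarith [h1, h2]
    calc Real.sqrt 3 ≤ Real.sqrt (dist ((-(‖X + Y‖)⁻¹) • (X + Y)) X ^ 2) :=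
          Real.sqrt_le_sqrt hd2
      _ = dist ((-(‖X + Y‖)⁻¹) • (X + Y)) X := Real.sqrt_sq dist_nonneg
  · have hinner : (inner ℝ ((-(‖X + Y‖)⁻¹) • (X + Y)) Y : ℝ) =
        -(‖X + Y‖)⁻¹ * (1 + (inner ℝ X Y : ℝ)) := by
      rw [real_inner_smul_left, inner_add_left, real_inner_self_eq_norm_sq, hY]
      ring
    have hd2 : 3 ≤ dist ((-(‖X + Y‖)⁻¹) • (X + Y)) Y ^ 2 := by
      rw [dist_eq_norm, norm_sub_sq_real, hinner, norm_smul, norm_neg, norm_inv,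
        Real.norm_eq_abs, abs_of_pos hnpos, hY]
      nlinarith [h1, h2]
    calc Real.sqrt 3 ≤ Real.sqrt (dist ((-(‖X + Y‖)⁻¹) • (X + Y)) Y ^ 2) :=
          Real.sqrt_le_sqrt hd2
      _ = dist ((-(‖X + Y‖)⁻¹) • (X + Y)) Y := Real.sqrt_sq dist_nonneg

theorem stmt_5 (A B C : EuclideanSpace ℝ (Fin 2))
    (hA : A ∈ Metric.sphere (0 : EuclideanSpace ℝ (Fin 2)) 1)
    (hB : B ∈ Metric.sphere (0 : EuclideanSpace ℝ (Fin 2)) 1)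
    (hC : C ∈ Metric.sphere (0 : EuclideanSpace ℝ (Fin 2)) 1)
    (lam : ℝ) (hlam2 : 2 < lam) (hlam4 : lam < 4) :
    ∃ M ∈ Metric.sphere (0 : EuclideanSpace ℝ (Fin 2)) 1,
      2 * Real.sqrt 3 ^ lam ≤ dist M A ^ lam + dist M B ^ lam + dist M C ^ lam := by
  rw [mem_sphere_zero_iff_norm] at hA hB hC
  have hlam0 : (0:ℝ) ≤ lam := by linarith
  -- pigeonhole: some pair has inner ≥ -1/2
  have hsum : 0 ≤ ‖A + B + C‖ ^ 2 := sq_nonneg _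
  have hexp : ‖A + B + C‖ ^ 2 =
      3 + 2 * ((inner ℝ A B : ℝ) + (inner ℝ A C : ℝ) + (inner ℝ B C : ℝ)) := by
    rw [norm_add_sq_real, norm_add_sq_real, inner_add_left, hA, hB, hC]
    ring
  have hpair : -(1/2) ≤ (inner ℝ A B : ℝ) ∨ -(1/2) ≤ (inner ℝ A C : ℝ)
      ∨ -(1/2) ≤ (inner ℝ B C : ℝ) := by
    by_contra h
    push_neg at h
    obtain ⟨h1, h2, h3⟩ := h
    rw [hexp] at hsum
    linarith
  -- key finishing step given M far from two of the points
  have finish : ∀ (M X Y Z : EuclideanSpace ℝ (Fin 2)), ‖M‖ = 1 →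
      Real.sqrt 3 ≤ dist M X → Real.sqrt 3 ≤ dist M Y →
      2 * Real.sqrt 3 ^ lam ≤ dist M X ^ lam + dist M Y ^ lam + dist M Z ^ lam := by
    intro M X Y Z hM h1 h2
    have e1 : Real.sqrt 3 ^ lam ≤ dist M X ^ lam :=
      Real.rpow_le_rpow (Real.sqrt_nonneg 3) h1 hlam0
    have e2 : Real.sqrt 3 ^ lam ≤ dist M Y ^ lam :=
      Real.rpow_le_rpow (Real.sqrt_nonneg 3) h2 hlam0
    have e3 : (0:ℝ) ≤ dist M Z ^ lam := Real.rpow_nonneg dist_nonneg lam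
    linarith
  rcases hpair with h | h | h
  · obtain ⟨M, hM, h1, h2⟩ := aux_far A B hA hB h
    exact ⟨M, mem_sphere_zero_iff_norm.mpr hM, finish M A B C hM h1 h2⟩
  · obtain ⟨M, hM, h1, h2⟩ := aux_far A C hA hC h
    refine ⟨M, mem_sphere_zero_iff_norm.mpr hM, ?_⟩
    have := finish M A C B hM h1 h2
    linarith
  · obtain ⟨M, hM, h1, h2⟩ := aux_far B C hB hC h
    refine ⟨M, mem_sphere_zero_iff_norm.mpr hM, ?_⟩
    have := finish M B C A hM h1 h2
    linarith
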